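/- Let φ: [0,1) → [0,∞) be a non-decreasing function and c, μ > 0 constants with μ ∈ (0,1), such that for all 0 < r < 1/2, φ(r/2) ≤ (c·(log(1/r))^(1/2) / (1 + c·(log(1/r))^(1/2)))·φ(r) + c·r^μ. Then for every α > 1 there is a constant C (depending only on c, μ, α and φ) such that φ(r) ≤ C/(log(1/r))^α for all 0 < r < 1/2. -/

import Mathlib

open Real

set_option maxHeartbeats 1000000 in
theorem iteration_lemma_log_coefficient
    (φ : ℝ → ℝ) (hmono : MonotoneOn φ (Set.Ico (0:ℝ) 1))
    (hnonneg : ∀ r ∈ Set.Ico (0:ℝ) 1, 0 ≤ φ r)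
    (c μ : ℝ) (hc : 0 < c) (hμ : μ ∈ Set.Ioo (0:ℝ) 1)
    (hrec : ∀ r : ℝ, 0 < r → r < 1/2 →
      φ (r/2) ≤ (c * Real.sqrt (Real.log (1/r)) / (1 + c * Real.sqrt (Real.log (1/r)))) * φ r
        + c * r ^ μ) :
    ∀ α : ℝ, 1 < α → ∃ C > 0, ∀ r : ℝ, 0 < r → r < 1/2 →
      φ r ≤ C / (Real.log (1/r)) ^ α := by
  obtain ⟨hμ0, hμ1⟩ := hμ
  intro α hα
  have hαpos : (0:ℝ) < α := by linarith
  set β : ℝ := α + 1/2 with hβdef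
  have hβpos : 0 < β := by rw [hβdef]; linarith
  have hlog2 : 0 < Real.log 2 := Real.log_pos one_lt_two
  set L₀ : ℝ := max (max (1/c^2) ((4*c*α*Real.log 2)^2)) 1 with hL₀def
  have hL₀1 : (1:ℝ) ≤ L₀ := le_max_right _ _
  have hL₀c : 1/c^2 ≤ L₀ := le_trans (le_max_left _ _) (le_max_left _ _)
  have hL₀y : (4*c*α*Real.log 2)^2 ≤ L₀ := le_trans (le_max_right _ _) (le_max_left _ _)
  set r₀ : ℝ := min (1/8) (Real.exp (-L₀)) with hr₀def
  have hr₀pos : 0 < r₀ := lt_min (by norm_num) (Real.exp_pos _)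
  have hr₀le : r₀ ≤ 1/8 := min_le_left _ _
  have hr₀L : L₀ ≤ Real.log (1/r₀) := by
    have h1 : r₀ ≤ Real.exp (-L₀) := min_le_right _ _
    have h2 : Real.exp L₀ ≤ 1/r₀ := by
      rw [le_div_iff₀ hr₀pos]
      calc Real.exp L₀ * r₀ ≤ Real.exp L₀ * Real.exp (-L₀) :=
            mul_le_mul_of_nonneg_left h1 (Real.exp_pos _).le
        _ = 1 := by rw [← Real.exp_add]; simp
    calc L₀ = Real.log (Real.exp L₀) := (Real.log_exp _).symm
      _ ≤ Real.log (1/r₀) := Real.log_le_log (Real.exp_pos _) h2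
  clear_value r₀ L₀
  set M : ℝ := (2*β/μ)^β with hMdef
  have hMpos : 0 < M := Real.rpow_pos_of_pos (by positivity) _
  clear_value M
  have hφhalf : 0 ≤ φ (1/2) := hnonneg _ ⟨by norm_num, by norm_num⟩
  have hLb : (0:ℝ) < Real.log (2/r₀) := by
    apply Real.log_pos
    rw [lt_div_iff₀ hr₀pos]; linarith
  set C : ℝ := max (max 1 (φ (1/2) * (Real.log (2/r₀))^α)) (16*c^2*M) with hCdef
  have hC1 : (1:ℝ) ≤ C := le_trans (le_max_left _ _) (le_max_left _ _)
  have hCbase : φ (1/2) * (Real.log (2/r₀))^α ≤ C :=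
    le_trans (le_max_right _ _) (le_max_left _ _)
  have hCM : 16*c^2*M ≤ C := le_max_right _ _
  have hCpos : 0 < C := by linarith
  clear_value C
  refine ⟨C, hCpos, ?_⟩
  -- key inequality at small scales
  have key : ∀ s : ℝ, 0 < s → s < r₀ →
      (c * Real.sqrt (Real.log (1/s)) / (1 + c * Real.sqrt (Real.log (1/s)))) *
        (C / (Real.log (1/s))^α) + c * s ^ μ ≤ C / (Real.log (1/(s/2)))^α := by
    intro s hs hsr₀
    set L : ℝ := Real.log (1/s) with hLdef
    have hLge : L₀ ≤ L := by
      refine le_trans hr₀L (Real.log_le_log (by positivity) ?_)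
      exact one_div_le_one_div_of_le hs hsr₀.le
    set L' : ℝ := Real.log (1/(s/2)) with hL'def
    have hL' : L' = L + Real.log 2 := by
      rw [hL'def, hLdef, show 1/(s/2) = 2 * (1/s) by field_simp,
        Real.log_mul (by norm_num) (one_div_ne_zero hs.ne')]
      ring
    have hs_exp : s ^ μ = Real.exp (-(μ * L)) := by
      rw [Real.rpow_def_of_pos hs]
      congr 1
      have hls : Real.log s = -L := by
        rw [hLdef, one_div, Real.log_inv, neg_neg]
      rw [hls]; ring
    clear_value L L'
    have hL1 : (1:ℝ) ≤ L := le_trans hL₀1 hLge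
    have hLpos : (0:ℝ) < L := by linarith
    have hsqpos : 0 < Real.sqrt L := Real.sqrt_pos.mpr hLpos
    have hsqnn : 0 ≤ Real.sqrt L := hsqpos.le
    have ha : 0 < c * Real.sqrt L := by positivity
    set u : ℝ := 1 / (c * Real.sqrt L) with hudef
    have hu0 : 0 < u := by positivity
    have hcs1 : 1 ≤ c * Real.sqrt L := by
      have h1 : Real.sqrt (1/c^2) ≤ Real.sqrt L := Real.sqrt_le_sqrt (le_trans hL₀c hLge)
      have h2 : Real.sqrt (1/c^2) = 1/c := by
        rw [one_div, Real.sqrt_inv, Real.sqrt_sq hc.le, one_div]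
      rw [h2] at h1
      calc (1:ℝ) = c * (1/c) := by field_simp
        _ ≤ c * Real.sqrt L := mul_le_mul_of_nonneg_left h1 hc.le
    have hu1 : u ≤ 1 := by rw [hudef, div_le_one ha]; linarith
    have hθ : c * Real.sqrt L / (1 + c * Real.sqrt L) = 1 / (1 + u) := by
      rw [hudef]
      rw [div_eq_div_iff (by linarith) (by positivity)]
      field_simp
      ring
    have hmss : Real.sqrt L * Real.sqrt L = L := Real.mul_self_sqrt hLpos.le
    have hy : α * Real.log 2 / L ≤ u / 4 := by
      have h1 : 4*c*α*Real.log 2 ≤ Real.sqrt L := by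
        have := Real.sqrt_le_sqrt (le_trans hL₀y hLge)
        rwa [Real.sqrt_sq (by positivity)] at this
      have h2 : u / 4 = 1 / (4*(c*Real.sqrt L)) := by rw [hudef]; ring
      rw [h2, div_le_div_iff₀ hLpos (by positivity)]
      calc α * Real.log 2 * (4*(c*Real.sqrt L)) = (4*c*α*Real.log 2) * Real.sqrt L := by ring
        _ ≤ Real.sqrt L * Real.sqrt L := mul_le_mul_of_nonneg_right h1 hsqnn
        _ = L := hmss
        _ = 1 * L := (one_mul L).symm
    clear_value u
    have hL'pos : 0 < L' := by rw [hL']; linarith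
    have hPpos : 0 < L ^ α := Real.rpow_pos_of_pos hLpos α
    have hP'pos : 0 < L' ^ α := Real.rpow_pos_of_pos hL'pos α
    have h5 : (0:ℝ) < 1 - u/4 := by linarith
    -- Step A
    have hA : L' ^ α ≤ ((1+u)/(1+u/4)) * L ^ α := by
      have hq : (0:ℝ) < L'/L := by positivity
      have h1 : Real.log (L'/L) ≤ Real.log 2 / L := by
        have h0 := Real.log_le_sub_one_of_pos hq
        have h2 : L'/L - 1 = Real.log 2 / L := by rw [hL']; field_simp; ring
        linarith
      have h2 : (L'/L) ^ α ≤ Real.exp (u/4) := by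
        rw [Real.rpow_def_of_pos hq]
        apply Real.exp_le_exp.mpr
        calc Real.log (L'/L) * α ≤ (Real.log 2 / L) * α :=
              mul_le_mul_of_nonneg_right h1 hαpos.le
          _ = α * Real.log 2 / L := by ring
          _ ≤ u/4 := hy
      have h3 : Real.exp (u/4) ≤ 1/(1-u/4) := by
        have h4 : 1 - u/4 ≤ Real.exp (-(u/4)) := by
          have := Real.add_one_le_exp (-(u/4)); linarith
        rw [show Real.exp (u/4) = 1 / Real.exp (-(u/4)) by
          rw [Real.exp_neg, one_div, inv_inv]]
        exact one_div_le_one_div_of_le h5 h4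
      have h6 : 1/(1-u/4) ≤ (1+u)/(1+u/4) := by
        rw [div_le_div_iff₀ h5 (by linarith)]
        have hx : 0 ≤ u * (2 - u) := mul_nonneg hu0.le (by linarith)
        calc 1 * (1+u/4) = (1+u) * (1-u/4) - u * (2-u) / 4 := by ring
          _ ≤ (1+u) * (1-u/4) := by linarith
      have h7 : (L'/L)^α ≤ (1+u)/(1+u/4) := le_trans h2 (le_trans h3 h6)
      have h8 : L' ^ α = (L'/L) ^ α * L ^ α := by
        rw [← Real.mul_rpow (le_of_lt hq) hLpos.le, div_mul_cancel₀ _ hLpos.ne']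
      rw [h8]
      exact mul_le_mul_of_nonneg_right h7 hPpos.le
    -- Step C : error term bound
    have hLβ : Real.sqrt L * L ^ α = L ^ β := by
      rw [Real.sqrt_eq_rpow, ← Real.rpow_add hLpos]
      congr 1
      rw [hβdef]; ring
    have hexpL : L ^ β ≤ M * Real.exp (μ * L / 2) := by
      have h1 : μ*L/(2*β) ≤ Real.exp (μ*L/(2*β)) := by
        have := Real.add_one_le_exp (μ*L/(2*β)); linarith
      have h3 : (0:ℝ) < 2*β/μ := by positivity
      have h2 : L ≤ (2*β/μ) * Real.exp (μ*L/(2*β)) := by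
        calc L = (2*β/μ) * (μ*L/(2*β)) := by field_simp
          _ ≤ (2*β/μ) * Real.exp (μ*L/(2*β)) := mul_le_mul_of_nonneg_left h1 h3.le
      calc L ^ β ≤ ((2*β/μ) * Real.exp (μ*L/(2*β))) ^ β :=
            Real.rpow_le_rpow hLpos.le h2 hβpos.le
        _ = (2*β/μ)^β * (Real.exp (μ*L/(2*β))) ^ β := Real.mul_rpow h3.le (Real.exp_pos _).le
        _ = M * Real.exp (μ*L/2) := by
            rw [← hMdef, Real.rpow_def_of_pos (Real.exp_pos _), Real.log_exp]
            congr 1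
            field_simp
    have hC' : c * s ^ μ ≤ C * u / (16 * L ^ α) := by
      have h1 : Real.exp (-(μ*L)) * L ^ β ≤ M := by
        calc Real.exp (-(μ*L)) * L ^ β ≤ Real.exp (-(μ*L)) * (M * Real.exp (μ*L/2)) :=
              mul_le_mul_of_nonneg_left hexpL (Real.exp_pos _).le
          _ = M * Real.exp (-(μ*L) + μ*L/2) := by rw [Real.exp_add]; ring
          _ ≤ M * 1 := by
              refine mul_le_mul_of_nonneg_left ?_ hMpos.le
              rw [Real.exp_le_one_iff]
              have := mul_pos hμ0 hLpos
              linarith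
          _ = M := mul_one M
      have hkey : 16 * c^2 * (Real.exp (-(μ*L)) * L ^ β) ≤ C := by
        have h2 := mul_le_mul_of_nonneg_left h1 (by positivity : (0:ℝ) ≤ 16*c^2)
        linarith
      rw [hs_exp]
      have hrw : C * u / (16 * L ^ α) = C / (16 * c * L ^ β) := by
        rw [hudef, ← hLβ]
        rw [div_eq_div_iff (by positivity) (by positivity)]
        field_simp
      rw [hrw, le_div_iff₀ (by positivity)]
      calc c * Real.exp (-(μ*L)) * (16 * c * L ^ β)
          = 16*c^2*(Real.exp (-(μ*L)) * L ^ β) := by ring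
        _ ≤ C := hkey
    -- assemble
    rw [hθ]
    have hQle : L' ^ α ≤ (1+u) * L ^ α / (1+u/4) := by
      rw [le_div_iff₀ (by linarith : (0:ℝ) < 1+u/4)]
      calc L' ^ α * (1+u/4) ≤ ((1+u)/(1+u/4)) * L ^ α * (1+u/4) :=
            mul_le_mul_of_nonneg_right hA (by linarith)
        _ = (1+u) * L ^ α := by
            field_simp
    have hlow : C * (1+u/4) / ((1+u) * L ^ α) ≤ C / L' ^ α := by
      rw [div_le_div_iff₀ (by positivity) hP'pos]
      calc C * (1+u/4) * L' ^ α ≤ C * (1+u/4) * ((1+u) * L ^ α / (1+u/4)) :=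
            mul_le_mul_of_nonneg_left hQle (by positivity)
        _ = C * ((1+u) * L ^ α) := by
            field_simp
    have e1 : 1/(1+u) * (C / L ^ α) = C / ((1+u) * L ^ α) := by
      rw [div_mul_div_comm, one_mul]
    have e2 : C*(u/4)/((1+u) * L ^ α) = C * (1+u/4) / ((1+u) * L ^ α) - C / ((1+u) * L ^ α) := by
      rw [div_sub_div_same]
      congr 1
      ring
    have e3 : C * u / (16 * L ^ α) ≤ C*(u/4)/((1+u) * L ^ α) := by
      rw [div_le_div_iff₀ (by positivity) (by positivity)]
      have hT : 0 ≤ C * u * L ^ α := by positivity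
      calc C * u * ((1+u) * L ^ α) = (C * u * L ^ α) * (1+u) := by ring
        _ ≤ (C * u * L ^ α) * 4 := mul_le_mul_of_nonneg_left (by linarith) hT
        _ = C * (u/4) * (16 * L ^ α) := by ring
    calc 1/(1+u) * (C / L ^ α) + c * s ^ μ
        ≤ 1/(1+u) * (C / L ^ α) + C * u / (16 * L ^ α) := by linarith
      _ ≤ C / L' ^ α := by rw [e1]; linarith
  -- base case : r₀/2 ≤ r < 1/2
  have base : ∀ r : ℝ, r₀/2 ≤ r → r < 1/2 → φ r ≤ C / (Real.log (1/r))^α := by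
    intro r hrr₀ hr2
    have hrpos : 0 < r := by linarith
    have hLr : 0 < Real.log (1/r) := by
      apply Real.log_pos
      rw [lt_div_iff₀ hrpos]; linarith
    have h1 : φ r ≤ φ (1/2) := by
      apply hmono ⟨hrpos.le, by linarith⟩ ⟨by norm_num, by norm_num⟩ (by linarith)
    have h2 : (Real.log (1/r))^α ≤ (Real.log (2/r₀))^α := by
      apply Real.rpow_le_rpow hLr.le _ hαpos.le
      apply Real.log_le_log (by positivity)
      rw [div_le_div_iff₀ hrpos hr₀pos]
      linarith
    rw [le_div_iff₀ (Real.rpow_pos_of_pos hLr α)]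
    calc φ r * (Real.log (1/r))^α ≤ φ (1/2) * (Real.log (2/r₀))^α :=
          mul_le_mul h1 h2 (Real.rpow_pos_of_pos hLr α).le hφhalf
      _ ≤ C := hCbase
  -- dyadic induction
  have main : ∀ n : ℕ, ∀ r : ℝ, 0 < r → r < 1/2 → r₀ / 2^n ≤ r →
      φ r ≤ C / (Real.log (1/r))^α := by
    intro n
    induction n with
    | zero =>
      intro r hr0 hr2 hge
      refine base r ?_ hr2
      simp only [pow_zero, div_one] at hge
      linarith
    | succ n ih =>
      intro r hr0 hr2 hge
      by_cases hbig : r₀/2 ≤ r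
      · exact base r hbig hr2
      · push_neg at hbig
        have hs0 : 0 < 2*r := by linarith
        have hsr₀ : 2*r < r₀ := by linarith
        have hs2 : 2*r < 1/2 := by linarith
        have hsge : r₀ / 2^n ≤ 2*r := by
          rw [pow_succ, ← div_div] at hge
          linarith
        have hφs := ih (2*r) hs0 hs2 hsge
        have hrec' := hrec (2*r) hs0 (by linarith)
        rw [show (2*r)/2 = r by ring] at hrec'
        have hθnn : 0 ≤ c * Real.sqrt (Real.log (1/(2*r))) /
            (1 + c * Real.sqrt (Real.log (1/(2*r)))) := by positivity
        have hkey := key (2*r) hs0 hsr₀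
        rw [show (2*r)/2 = r by ring] at hkey
        calc φ r ≤ c * Real.sqrt (Real.log (1/(2*r))) /
              (1 + c * Real.sqrt (Real.log (1/(2*r)))) * φ (2*r) + c * (2*r) ^ μ := hrec'
          _ ≤ c * Real.sqrt (Real.log (1/(2*r))) /
              (1 + c * Real.sqrt (Real.log (1/(2*r)))) * (C / (Real.log (1/(2*r)))^α)
              + c * (2*r) ^ μ := by
              have := mul_le_mul_of_nonneg_left hφs hθnn
              linarith
          _ ≤ C / (Real.log (1/r))^α := hkey
  -- conclusion
  intro r hr0 hr2
  obtain ⟨n, hn⟩ := pow_unbounded_of_one_lt (r₀ / r) (one_lt_two (α := ℝ))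
  apply main n r hr0 hr2
  rw [div_lt_iff₀ hr0] at hn
  rw [div_le_iff₀ (by positivity : (0:ℝ) < 2^n)]
  calc r₀ ≤ 2^n * r := hn.le
    _ = r * 2^n := mul_comm _ _
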